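/- Let p be a prime. If G₃ is a group belonging to family 𝒢₃ and G₄ is a group belonging to family 𝒢₄, then G₃ and G₄ are not isomorphic. -/

import Mathlib

/-- Membership in family 𝒢₃: `G = ⟨x, y, t₁, t₂⟩`, `Z(G) = ⟨t₁⟩ × ⟨t₂⟩`,
`o(t₁) = p^{m₁}`, `o(t₂) = p^{m₂}`, `x^p = 1`, `y^p = t₂`, `[x,y] = t₁^{p^{m₁-1}}`. -/
def InFamilyG3 (p m₁ m₂ : ℕ) (G : Type*) [Group G] : Prop :=
  ∃ x y t₁ t₂ : G,
    Subgroup.closure {x, y, t₁, t₂} = ⊤ ∧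
    Subgroup.center G = Subgroup.closure {t₁, t₂} ∧
    Subgroup.zpowers t₁ ⊓ Subgroup.zpowers t₂ = ⊥ ∧
    orderOf t₁ = p ^ m₁ ∧ orderOf t₂ = p ^ m₂ ∧
    x ^ p = 1 ∧ y ^ p = t₂ ∧
    x⁻¹ * y⁻¹ * x * y = t₁ ^ p ^ (m₁ - 1)

/-- Membership in family 𝒢₄: as 𝒢₃ but with `x^p = t₁`, `y^p = t₂`. -/
def InFamilyG4 (p m₁ m₂ : ℕ) (G : Type*) [Group G] : Prop :=
  ∃ x y t₁ t₂ : G,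
    Subgroup.closure {x, y, t₁, t₂} = ⊤ ∧
    Subgroup.center G = Subgroup.closure {t₁, t₂} ∧
    Subgroup.zpowers t₁ ⊓ Subgroup.zpowers t₂ = ⊥ ∧
    orderOf t₁ = p ^ m₁ ∧ orderOf t₂ = p ^ m₂ ∧
    x ^ p = t₁ ∧ y ^ p = t₂ ∧
    x⁻¹ * y⁻¹ * x * y = t₁ ^ p ^ (m₁ - 1)

/-- Membership in family 𝒢₅: `G = ⟨x, y, t₁, u₁⟩`, `Z(G) = ⟨t₁⟩ × ⟨u₁⟩`,
`o(t₁) = p^{m₁}`, `o(u₁) = ∞`, `x^p = 1`, `y^p = u₁`, `[x,y] = t₁^{p^{m₁-1}}`. -/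
def InFamilyG5 (p m₁ : ℕ) (G : Type*) [Group G] : Prop :=
  ∃ x y t₁ u₁ : G,
    Subgroup.closure {x, y, t₁, u₁} = ⊤ ∧
    Subgroup.center G = Subgroup.closure {t₁, u₁} ∧
    Subgroup.zpowers t₁ ⊓ Subgroup.zpowers u₁ = ⊥ ∧
    orderOf t₁ = p ^ m₁ ∧ ¬ IsOfFinOrder u₁ ∧
    x ^ p = 1 ∧ y ^ p = u₁ ∧
    x⁻¹ * y⁻¹ * x * y = t₁ ^ p ^ (m₁ - 1)

/-- Membership in family 𝒢₆: as 𝒢₅ but with `x^p = t₁`, `y^p = u₁`. -/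
def InFamilyG6 (p m₁ : ℕ) (G : Type*) [Group G] : Prop :=
  ∃ x y t₁ u₁ : G,
    Subgroup.closure {x, y, t₁, u₁} = ⊤ ∧
    Subgroup.center G = Subgroup.closure {t₁, u₁} ∧
    Subgroup.zpowers t₁ ⊓ Subgroup.zpowers u₁ = ⊥ ∧
    orderOf t₁ = p ^ m₁ ∧ ¬ IsOfFinOrder u₁ ∧
    x ^ p = t₁ ∧ y ^ p = u₁ ∧
    x⁻¹ * y⁻¹ * x * y = t₁ ^ p ^ (m₁ - 1)


section AuxFam

variable {G : Type*} [Group G]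

/-- If `c` is central and `y⁻¹ * x * y = x * c`, then
`x ^ a * y ^ b = y ^ b * (x ^ a * c ^ (a * b))` for all integers `a b`. -/
lemma auxfam_comm_zpow {x y c : G} (hc : c ∈ Subgroup.center G)
    (h : y⁻¹ * x * y = x * c) (a b : ℤ) :
    x ^ a * y ^ b = y ^ b * (x ^ a * c ^ (a * b)) := by
  have hcg : ∀ g : G, Commute g c := fun g => Subgroup.mem_center_iff.mp hc g
  have h1 : ∀ a : ℤ, y⁻¹ * x ^ a * y = x ^ a * c ^ a := by
    intro a
    have hmz := map_zpow (MulAut.conj y⁻¹) x a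
    simp only [MulAut.conj_apply, inv_inv] at hmz
    rw [hmz, h, (hcg x).mul_zpow]
  have h1' : ∀ a : ℤ, x ^ a * y = y * (x ^ a * c ^ a) := by
    intro a; rw [← h1 a]; group
  have h2 : ∀ a : ℤ, x ^ a * y⁻¹ = y⁻¹ * (x ^ a * c ^ (-a)) := by
    intro a
    apply mul_right_cancel (b := y)
    have hcy : y * c ^ (-a : ℤ) = c ^ (-a : ℤ) * y := ((hcg y).zpow_right (-a)).eq
    calc x ^ a * y⁻¹ * y = x ^ a := by group
      _ = x ^ a * c ^ a * c ^ (-a : ℤ) := by rw [mul_assoc, ← zpow_add, add_neg_cancel, zpow_zero, mul_one]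
      _ = y⁻¹ * x ^ a * y * c ^ (-a : ℤ) := by rw [h1]
      _ = y⁻¹ * x ^ a * (y * c ^ (-a : ℤ)) := by rw [mul_assoc]
      _ = y⁻¹ * x ^ a * (c ^ (-a : ℤ) * y) := by rw [hcy]
      _ = y⁻¹ * (x ^ a * c ^ (-a : ℤ)) * y := by simp only [mul_assoc]
  induction b using Int.induction_on with
  | zero => simp
  | succ b ih =>
      have hcyp : ∀ m : ℤ, c ^ m * y = y * c ^ m := fun m => ((hcg y).zpow_right m).symm.eq
      calc x ^ a * y ^ ((b : ℤ) + 1)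
          = x ^ a * y ^ (b : ℤ) * y := by rw [zpow_add_one, mul_assoc]
        _ = y ^ (b : ℤ) * (x ^ a * c ^ (a * b)) * y := by rw [ih]
        _ = y ^ (b : ℤ) * (x ^ a * (c ^ (a * b) * y)) := by simp only [mul_assoc]
        _ = y ^ (b : ℤ) * (x ^ a * (y * c ^ (a * b))) := by rw [hcyp]
        _ = y ^ (b : ℤ) * ((x ^ a * y) * c ^ (a * b)) := by simp only [mul_assoc]
        _ = y ^ (b : ℤ) * ((y * (x ^ a * c ^ a)) * c ^ (a * b)) := by rw [h1']
        _ = (y ^ (b : ℤ) * y) * (x ^ a * (c ^ a * c ^ (a * b))) := by simp only [mul_assoc]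
        _ = y ^ ((b : ℤ) + 1) * (x ^ a * c ^ (a * ((b : ℤ) + 1))) := by
              have hee : a + a * (b : ℤ) = a * ((b : ℤ) + 1) := by ring
              rw [← zpow_add_one, ← zpow_add, hee]
  | pred b ih =>
      have hcyp : ∀ m : ℤ, c ^ m * y⁻¹ = y⁻¹ * c ^ m := fun m =>
        ((hcg y).zpow_right m).symm.inv_right.eq
      calc x ^ a * y ^ (-(b : ℤ) - 1)
          = x ^ a * y ^ (-(b : ℤ)) * y⁻¹ := by rw [zpow_sub_one, mul_assoc]
        _ = y ^ (-(b : ℤ)) * (x ^ a * c ^ (a * (-(b:ℤ)))) * y⁻¹ := by rw [ih]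
        _ = y ^ (-(b : ℤ)) * (x ^ a * (c ^ (a * (-(b:ℤ))) * y⁻¹)) := by simp only [mul_assoc]
        _ = y ^ (-(b : ℤ)) * (x ^ a * (y⁻¹ * c ^ (a * (-(b:ℤ))))) := by rw [hcyp]
        _ = y ^ (-(b : ℤ)) * ((x ^ a * y⁻¹) * c ^ (a * (-(b:ℤ)))) := by simp only [mul_assoc]
        _ = y ^ (-(b : ℤ)) * ((y⁻¹ * (x ^ a * c ^ (-a))) * c ^ (a * (-(b:ℤ)))) := by rw [h2]
        _ = (y ^ (-(b : ℤ)) * y⁻¹) * (x ^ a * (c ^ (-a) * c ^ (a * (-(b:ℤ))))) := by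
              simp only [mul_assoc]
        _ = y ^ (-(b : ℤ) - 1) * (x ^ a * c ^ (a * (-(b:ℤ) - 1))) := by
              have hee : -a + a * (-(b : ℤ)) = a * (-(b : ℤ) - 1) := by ring
              rw [← zpow_sub_one, ← zpow_add, hee]

/-- If `d` is central and `v * u = u * v * d` then `(u * v) ^ n = u ^ n * v ^ n * d ^ (n.choose 2)`. -/
lemma auxfam_mul_pow {u v d : G} (hd : d ∈ Subgroup.center G)
    (h : v * u = u * v * d) (n : ℕ) :
    (u * v) ^ n = u ^ n * v ^ n * d ^ n.choose 2 := by
  have hdg : ∀ g : G, Commute g d := fun g => Subgroup.mem_center_iff.mp hd g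
  have key : ∀ m : ℕ, v ^ m * u = u * v ^ m * d ^ m := by
    intro m
    induction m with
    | zero => simp
    | succ m ih =>
        calc v ^ (m + 1) * u = v ^ m * (v * u) := by rw [pow_succ, mul_assoc]
          _ = v ^ m * (u * v * d) := by rw [h]
          _ = (v ^ m * u) * v * d := by simp only [mul_assoc]
          _ = u * v ^ m * d ^ m * v * d := by rw [ih]
          _ = u * v ^ m * (d ^ m * v) * d := by simp only [mul_assoc]
          _ = u * v ^ m * (v * d ^ m) * d := by rw [((hdg v).pow_right m).symm.eq]
          _ = u * v ^ (m + 1) * d ^ (m + 1) := by rw [pow_succ, pow_succ]; simp only [mul_assoc]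
  induction n with
  | zero => simp
  | succ n ih =>
      have hch : (n + 1).choose 2 = n.choose 2 + n := by
        rw [Nat.choose_succ_succ]; simp [Nat.choose_one_right, Nat.add_comm]
      calc (u * v) ^ (n + 1) = (u * v) ^ n * (u * v) := by rw [pow_succ]
        _ = u ^ n * v ^ n * d ^ n.choose 2 * (u * v) := by rw [ih]
        _ = u ^ n * v ^ n * (d ^ n.choose 2 * u) * v := by simp only [mul_assoc]
        _ = u ^ n * v ^ n * (u * d ^ n.choose 2) * v := by rw [((hdg u).pow_right _).symm.eq]
        _ = u ^ n * (v ^ n * u) * (d ^ n.choose 2 * v) := by simp only [mul_assoc]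
        _ = u ^ n * (u * v ^ n * d ^ n) * (v * d ^ n.choose 2) := by
              rw [key, ((hdg v).pow_right _).symm.eq]
        _ = u ^ (n + 1) * v ^ (n + 1) * (d ^ n * d ^ n.choose 2) := by
              rw [pow_succ u, pow_succ v]
              have := ((hdg v).pow_right n).symm.eq   -- d^n * v = v * d^n
              calc u ^ n * (u * v ^ n * d ^ n) * (v * d ^ n.choose 2)
                  = u ^ n * u * (v ^ n * (d ^ n * v) * d ^ n.choose 2) := by simp only [mul_assoc]
                _ = u ^ n * u * (v ^ n * (v * d ^ n) * d ^ n.choose 2) := by rw [this]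
                _ = u ^ n * u * (v ^ n * v) * (d ^ n * d ^ n.choose 2) := by simp only [mul_assoc]
        _ = u ^ (n + 1) * v ^ (n + 1) * d ^ (n + 1).choose 2 := by
              have hee : n + n.choose 2 = (n + 1).choose 2 := by omega
              rw [← pow_add, hee]

/-- Collecting commuting zpowers. -/
lemma auxfam_collect {t₁ t₂ : G} (h : Commute t₁ t₂) (A B A' B' : ℤ) :
    (t₁ ^ A * t₂ ^ B) * (t₁ ^ A' * t₂ ^ B') = t₁ ^ (A + A') * t₂ ^ (B + B') := by
  rw [(h.symm.zpow_zpow B A').mul_mul_mul_comm, ← zpow_add, ← zpow_add]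

end AuxFam

section AuxFam2

variable {G : Type*} [Group G]

lemma auxfam_move2 {w : G} (hw : w ∈ Subgroup.center G) (g : G) : w * g = g * w :=
  (Subgroup.mem_center_iff.mp hw g).symm

lemma auxfam_move {w : G} (hw : w ∈ Subgroup.center G) (g h : G) :
    w * (g * h) = g * (w * h) := by
  rw [← mul_assoc, auxfam_move2 hw g, mul_assoc]

/-- Decomposition in the closure of two commuting elements. -/
lemma auxfam_two_gen {t₁ t₂ : G} (h : Commute t₁ t₂) {g : G}
    (hg : g ∈ Subgroup.closure {t₁, t₂}) : ∃ i j : ℤ, g = t₁ ^ i * t₂ ^ j := by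
  refine Subgroup.closure_induction ?_ ?_ ?_ ?_ hg
  · intro w hw
    simp only [Set.mem_insert_iff, Set.mem_singleton_iff] at hw
    rcases hw with rfl | rfl
    · exact ⟨1, 0, by simp⟩
    · exact ⟨0, 1, by simp⟩
  · exact ⟨0, 0, by simp⟩
  · rintro g₁ g₂ _ _ ⟨i, j, rfl⟩ ⟨i', j', rfl⟩
    exact ⟨i + i', j + j', auxfam_collect h i j i' j'⟩
  · rintro g₁ _ ⟨i, j, rfl⟩
    refine ⟨-i, -j, ?_⟩
    rw [mul_inv_rev, ← zpow_neg, ← zpow_neg, (h.symm.zpow_zpow (-j) (-i)).eq]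

/-- In a group of family 𝒢₄, every element whose `p`-th power is trivial is central. -/
lemma auxfam_G4_central {p m₁ m₂ : ℕ} (hp : p.Prime) (hm₁ : 1 ≤ m₁) (hm₂ : 1 ≤ m₂)
    {G : Type*} [Group G] (h : InFamilyG4 p m₁ m₂ G) {g : G} (hg : g ^ p = 1) :
    g ∈ Subgroup.center G := by
  classical
  obtain ⟨x, y, t₁, t₂, hgen, hZ, hinf, ho1, ho2, hxp, hyp, hcm⟩ := h
  have ht₁ : t₁ ∈ Subgroup.center G := by
    rw [hZ]; exact Subgroup.subset_closure (by simp)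
  have ht₂ : t₂ ∈ Subgroup.center G := by
    rw [hZ]; exact Subgroup.subset_closure (by simp)
  have h12 : Commute t₁ t₂ := auxfam_move2 ht₁ t₂
  set c : G := t₁ ^ p ^ (m₁ - 1) with hcdef
  have hc : c ∈ Subgroup.center G := (Subgroup.center G).pow_mem ht₁ _
  have hconj : y⁻¹ * x * y = x * c := by
    rw [← hcm]; group
  -- the basic swap lemma
  have hswap : ∀ a b : ℤ, y ^ b * x ^ a = x ^ a * y ^ b * c ^ (-(a * b)) := by
    intro a b
    have h0 := auxfam_comm_zpow hc hconj a b
    calc y ^ b * x ^ a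
        = y ^ b * (x ^ a * c ^ (a * b)) * c ^ (-(a * b)) := by
          rw [mul_assoc, mul_assoc, ← zpow_add, add_neg_cancel, zpow_zero, mul_one]
      _ = x ^ a * y ^ b * c ^ (-(a * b)) := by rw [← h0, mul_assoc]
  -- normal form
  have NF : ∀ g : G, ∃ a b : ℤ, ∃ z : G, z ∈ Subgroup.center G ∧ g = x ^ a * y ^ b * z := by
    intro g
    have hgmem : g ∈ Subgroup.closure {x, y, t₁, t₂} := by rw [hgen]; exact Subgroup.mem_top g
    refine Subgroup.closure_induction ?_ ?_ ?_ ?_ hgmem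
    · intro w hw
      simp only [Set.mem_insert_iff, Set.mem_singleton_iff] at hw
      rcases hw with rfl | rfl | hw | hw
      · exact ⟨1, 0, 1, Subgroup.one_mem _, by simp⟩
      · exact ⟨0, 1, 1, Subgroup.one_mem _, by simp⟩
      · exact ⟨0, 0, w, by rw [hw]; exact ht₁, by simp⟩
      · exact ⟨0, 0, w, by rw [hw]; exact ht₂, by simp⟩
    · exact ⟨0, 0, 1, Subgroup.one_mem _, by simp⟩
    · rintro g₁ g₂ _ _ ⟨a, b, z, hz, rfl⟩ ⟨a', b', z', hz', rfl⟩
      refine ⟨a + a', b + b', c ^ (-(a' * b)) * (z * z'),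
        Subgroup.mul_mem _ ((Subgroup.center G).zpow_mem hc _) (Subgroup.mul_mem _ hz hz'), ?_⟩
      have key' : ∀ r : G, y ^ b * (x ^ a' * r) = x ^ a' * (y ^ b * (c ^ (-(a' * b)) * r)) := by
        intro r
        rw [← mul_assoc, hswap a' b]
        simp only [mul_assoc]
      rw [zpow_add, zpow_add]
      simp only [mul_assoc]
      rw [auxfam_move hz (x ^ a') (y ^ b' * z'), auxfam_move hz (y ^ b') z', key',
        auxfam_move ((Subgroup.center G).zpow_mem hc (-(a' * b))) (y ^ b') (z * z')]
    · rintro g₁ _ ⟨a, b, z, hz, rfl⟩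
      refine ⟨-a, -b, c ^ (-(a * b)) * z⁻¹,
        Subgroup.mul_mem _ ((Subgroup.center G).zpow_mem hc _) (Subgroup.inv_mem _ hz), ?_⟩
      have hzi : z⁻¹ ∈ Subgroup.center G := Subgroup.inv_mem _ hz
      have hs := hswap (-a) (-b)
      rw [neg_mul_neg] at hs
      calc (x ^ a * y ^ b * z)⁻¹
          = z⁻¹ * ((y ^ b)⁻¹ * (x ^ a)⁻¹) := by rw [mul_inv_rev, mul_inv_rev]
        _ = z⁻¹ * (y ^ (-b) * x ^ (-a)) := by rw [← zpow_neg, ← zpow_neg]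
        _ = y ^ (-b) * x ^ (-a) * z⁻¹ := by rw [auxfam_move2 hzi]
        _ = x ^ (-a) * y ^ (-b) * c ^ (-(a * b)) * z⁻¹ := by rw [hs]
        _ = x ^ (-a) * y ^ (-b) * (c ^ (-(a * b)) * z⁻¹) := by simp only [mul_assoc]
  -- decompose g
  obtain ⟨a, b, z, hz, rfl⟩ := NF g
  obtain ⟨i, j, rfl⟩ := auxfam_two_gen h12 (by rw [← hZ]; exact hz)
  set z : G := t₁ ^ i * t₂ ^ j with hzdef
  -- power formula setup
  set u : G := x ^ a with hudef
  set v : G := y ^ b * z with hvdef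
  set d : G := c ^ (-(a * b)) with hddef
  have hd : d ∈ Subgroup.center G := (Subgroup.center G).zpow_mem hc _
  have hvu : v * u = u * v * d := by
    calc v * u = y ^ b * (z * x ^ a) := by rw [hvdef, mul_assoc]
      _ = y ^ b * (x ^ a * z) := by rw [auxfam_move2 hz]
      _ = y ^ b * x ^ a * z := by rw [mul_assoc]
      _ = x ^ a * y ^ b * d * z := by rw [hswap]
      _ = x ^ a * y ^ b * (d * z) := by rw [mul_assoc]
      _ = x ^ a * y ^ b * (z * d) := by rw [auxfam_move2 hd]
      _ = u * v * d := by rw [hudef, hvdef]; simp only [mul_assoc]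
  have hpow := auxfam_mul_pow hd hvu p
  have hguv : x ^ a * y ^ b * z = u * v := by rw [hudef, hvdef, mul_assoc]
  -- compute the pieces
  have hu : u ^ p = t₁ ^ a := by
    rw [hudef, ← hxp, ← zpow_natCast (x ^ a) p, ← zpow_mul, mul_comm, zpow_mul, zpow_natCast]
  have hyb : (y ^ b) ^ p = t₂ ^ b := by
    rw [← hyp, ← zpow_natCast (y ^ b) p, ← zpow_mul, mul_comm, zpow_mul, zpow_natCast]
  have hzp : z ^ p = t₁ ^ (i * p) * t₂ ^ (j * p) := by
    rw [hzdef, (h12.zpow_zpow i j).mul_pow,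
      ← zpow_natCast (t₁ ^ i) p, ← zpow_mul, ← zpow_natCast (t₂ ^ j) p, ← zpow_mul]
  have hv : v ^ p = t₂ ^ b * (t₁ ^ (i * p) * t₂ ^ (j * p)) := by
    have hcom : Commute (y ^ b) z := (auxfam_move2 hz (y ^ b)).symm
    rw [hvdef, hcom.mul_pow, hyb, hzp]
  have hdch : d ^ p.choose 2 = t₁ ^ ((p ^ (m₁ - 1) : ℕ) * (-(a * b) * (p.choose 2 : ℕ))) := by
    rw [hddef, hcdef, ← zpow_natCast t₁ (p ^ (m₁ - 1)), ← zpow_mul,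
      ← zpow_natCast (t₁ ^ ((p ^ (m₁ - 1) : ℕ) * -(a * b))) (p.choose 2), ← zpow_mul]
    ring_nf
  set Ec : ℤ := (p ^ (m₁ - 1) : ℕ) * (-(a * b) * (p.choose 2 : ℕ)) with hEc
  -- assemble
  have hfinal : t₁ ^ (a + i * p + Ec) * t₂ ^ (b + j * p) = 1 := by
    have e1 : (u * v) ^ p = t₁ ^ (a + i * p + Ec) * t₂ ^ (b + j * p) := by
      rw [hpow, hu, hv, hdch]
      calc t₁ ^ a * (t₂ ^ b * (t₁ ^ (i * p) * t₂ ^ (j * p))) * t₁ ^ Ec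
          = (t₁ ^ a * t₂ ^ b) * (t₁ ^ (i * p) * t₂ ^ (j * p)) * t₁ ^ Ec := by
            simp only [mul_assoc]
        _ = t₁ ^ (a + i * p) * t₂ ^ (b + j * p) * (t₁ ^ Ec * t₂ ^ (0 : ℤ)) := by
            rw [auxfam_collect h12]; simp
        _ = t₁ ^ (a + i * p + Ec) * t₂ ^ (b + j * p + 0) := by rw [auxfam_collect h12]
        _ = t₁ ^ (a + i * p + Ec) * t₂ ^ (b + j * p) := by rw [add_zero]
    rw [← e1, ← hguv, hg]
  -- separate the two factors
  have ht1A : t₁ ^ (a + i * p + Ec) = 1 := by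
    have hmem : t₁ ^ (a + i * p + Ec) ∈ Subgroup.zpowers t₁ ⊓ Subgroup.zpowers t₂ := by
      refine ⟨Subgroup.zpow_mem_zpowers t₁ _, ?_⟩
      have : t₁ ^ (a + i * p + Ec) = t₂ ^ (-(b + j * p)) := by
        rw [zpow_neg, eq_inv_iff_mul_eq_one, hfinal]
      rw [this]; exact Subgroup.zpow_mem_zpowers t₂ _
    rw [hinf, Subgroup.mem_bot] at hmem
    exact hmem
  have ht2B : t₂ ^ (b + j * p) = 1 := by
    have := hfinal
    rw [ht1A, one_mul] at this
    exact this
  -- divisibility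
  have hA : ((p : ℤ)) ∣ (a + i * p + Ec) := by
    have h1 : (orderOf t₁ : ℤ) ∣ (a + i * p + Ec) := orderOf_dvd_iff_zpow_eq_one.mpr ht1A
    rw [ho1] at h1
    have h2 : ((p : ℤ)) ∣ ((p ^ m₁ : ℕ) : ℤ) := by
      push_cast
      exact dvd_pow_self _ (by omega)
    exact h2.trans h1
  have hB : ((p : ℤ)) ∣ (b + j * p) := by
    have h1 : (orderOf t₂ : ℤ) ∣ (b + j * p) := orderOf_dvd_iff_zpow_eq_one.mpr ht2B
    rw [ho2] at h1
    have h2 : ((p : ℤ)) ∣ ((p ^ m₂ : ℕ) : ℤ) := by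
      push_cast
      exact dvd_pow_self _ (by omega)
    exact h2.trans h1
  have hpb : ((p : ℤ)) ∣ b := by
    have := hB.sub (dvd_mul_left (p : ℤ) j)
    simpa using this
  have hpEc : ((p : ℤ)) ∣ Ec := by
    rw [hEc]
    exact Dvd.dvd.mul_left ((dvd_neg.mpr (hpb.mul_left a)).mul_right _) _
  have hpa : ((p : ℤ)) ∣ a := by
    have := (hA.sub (dvd_mul_left (p : ℤ) i)).sub hpEc
    have heq : a + i * p + Ec - i * p - Ec = a := by ring
    rwa [heq] at this
  -- conclude centrality
  obtain ⟨a', rfl⟩ := hpa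
  obtain ⟨b', rfl⟩ := hpb
  rw [hudef]
  have hxa : x ^ ((p : ℤ) * a') = t₁ ^ a' := by rw [zpow_mul, zpow_natCast, hxp]
  have hyb' : y ^ ((p : ℤ) * b') = t₂ ^ b' := by rw [zpow_mul, zpow_natCast, hyp]
  rw [hxa, hyb']
  exact Subgroup.mul_mem _
    (Subgroup.mul_mem _ ((Subgroup.center G).zpow_mem ht₁ a')
      ((Subgroup.center G).zpow_mem ht₂ b')) hz

end AuxFam2

theorem familyG3_not_iso_familyG4' (p : ℕ) (hp : p.Prime)
    (G₃ : Type*) [Group G₃] (G₄ : Type*) [Group G₄]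
    (h₃ : ∃ m₁ m₂, 1 ≤ m₁ ∧ 1 ≤ m₂ ∧ InFamilyG3 p m₁ m₂ G₃)
    (h₄ : ∃ m₁ m₂, 1 ≤ m₁ ∧ 1 ≤ m₂ ∧ InFamilyG4 p m₁ m₂ G₄) :
    IsEmpty (G₃ ≃* G₄) := by
  obtain ⟨m₁, m₂, hm₁, hm₂, x, y, t₁, t₂, hgen, hZ, hinf, ho1, ho2, hxp, hyp, hcm⟩ := h₃
  obtain ⟨n₁, n₂, hn₁, hn₂, hG4⟩ := h₄
  constructor
  intro e
  -- x is not central in G₃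
  have hxnc : x ∉ Subgroup.center G₃ := by
    intro hx
    have hcomm : Commute x y := (Subgroup.mem_center_iff.mp hx y).symm
    have h1 : x⁻¹ * y⁻¹ * x * y = 1 := by
      have h2 : y⁻¹ * x = x * y⁻¹ := hcomm.inv_right.eq.symm
      calc x⁻¹ * y⁻¹ * x * y = x⁻¹ * (y⁻¹ * x) * y := by rw [mul_assoc x⁻¹]
        _ = x⁻¹ * (x * y⁻¹) * y := by rw [h2]
        _ = 1 := by group
    rw [hcm] at h1
    have hdvd : orderOf t₁ ∣ p ^ (m₁ - 1) := orderOf_dvd_of_pow_eq_one h1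
    rw [ho1] at hdvd
    have hle : m₁ ≤ m₁ - 1 := (Nat.pow_dvd_pow_iff_le_right hp.one_lt).mp hdvd
    omega
  -- but (e x)^p = 1, so e x is central in G₄, hence x is central in G₃
  have hexp : (e x) ^ p = 1 := by rw [← map_pow, hxp, map_one]
  have hec : e x ∈ Subgroup.center G₄ := auxfam_G4_central hp hn₁ hn₂ hG4 hexp
  apply hxnc
  rw [Subgroup.mem_center_iff]
  intro g
  apply e.injective
  rw [map_mul, map_mul]
  exact Subgroup.mem_center_iff.mp hec (e g)

theorem familyG3_not_iso_familyG4 (p : ℕ) (hp : p.Prime)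
    (G₃ : Type*) [Group G₃] (G₄ : Type*) [Group G₄]
    (h₃ : ∃ m₁ m₂, 1 ≤ m₁ ∧ 1 ≤ m₂ ∧ InFamilyG3 p m₁ m₂ G₃)
    (h₄ : ∃ m₁ m₂, 1 ≤ m₁ ∧ 1 ≤ m₂ ∧ InFamilyG4 p m₁ m₂ G₄) :
    IsEmpty (G₃ ≃* G₄) :=
  familyG3_not_iso_familyG4' p hp G₃ G₄ h₃ h₄
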